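/- Let F be a family of continuously differentiable real-valued functions on a compact metric measure space (X, d, ν) with ν a probability measure, and suppose there exist constants α > 0 and M > 0 such that ∫ exp(α |φ|) dν ≤ M for all φ ∈ F. Suppose moreover that every ball of radius r ≤ 1 in X has ν-measure at least c·r^D for constants c > 0, D > 0. Then there is a constant A₀ > 0 such that for every φ ∈ F, ‖φ‖_∞ ≤ A₀ (1 + log⁺ ‖∇φ‖_∞), where ∇φ denotes the gradient (or the Lipschitz constant of φ) and log⁺ t = max(0, log t). -/

import Mathlib

open MeasureTheory Metric Real

set_option maxHeartbeats 1000000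

/-- Uniform exponential integrability plus lower volume regularity on a compact metric
probability space imply the bound `‖φ‖_∞ ≤ A₀ (1 + log⁺ ‖∇φ‖_∞)` for Lipschitz functions
of the family, where `‖∇φ‖_∞` is a Lipschitz constant of `φ`. -/
theorem stmt2 {X : Type*} [MetricSpace X] [CompactSpace X] [MeasurableSpace X]
    [BorelSpace X] (ν : Measure X) [IsProbabilityMeasure ν]
    (F : Set (X → ℝ)) (α M c D : ℝ) (hα : 0 < α) (hM : 0 < M) (hc : 0 < c) (hD : 0 < D)
    (hexp : ∀ φ ∈ F, ∫ x, Real.exp (α * |φ x|) ∂ν ≤ M)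
    (hvol : ∀ (x : X) (r : ℝ), 0 < r → r ≤ 1 → c * r ^ D ≤ (ν (Metric.ball x r)).toReal) :
    ∃ A₀ > 0, ∀ φ ∈ F, ∀ K : NNReal, LipschitzWith K φ →
      ∀ x : X, |φ x| ≤ A₀ * (1 + max 0 (Real.log K)) := by
  have hlog2 : 0 < Real.log 2 := Real.log_pos one_lt_two
  have hα2 : 0 < 2/α := by positivity
  set m1 : ℝ := max 0 (Real.log (M/c)) with hm1def
  have hm1 : 0 ≤ m1 := le_max_left _ _
  set A₀ : ℝ := 1 + (2/α) * (m1 + 2*D*Real.log 2 + D) with hAdef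
  have hp1 : 0 ≤ (2/α) * m1 := mul_nonneg hα2.le hm1
  have hp2 : 0 ≤ (2/α) * D * Real.log 2 := mul_nonneg (mul_nonneg hα2.le hD.le) hlog2.le
  have hp3 : 0 ≤ (2/α) * D := mul_nonneg hα2.le hD.le
  have hA1 : 1 ≤ A₀ := by rw [hAdef]; nlinarith
  refine ⟨A₀, by linarith, ?_⟩
  intro φ hφ K hK x
  have hLnn : (0:ℝ) ≤ max 0 (Real.log K) := le_max_left _ _
  have hA0L : 0 ≤ A₀ * max 0 (Real.log K) := mul_nonneg (by linarith) hLnn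
  by_cases ht : |φ x| ≤ 1
  · nlinarith
  push_neg at ht
  set t := |φ x| with htdef
  have hKnn : (0:ℝ) ≤ (K:ℝ) := K.coe_nonneg
  set r : ℝ := 1/(2*((K:ℝ)+1)) with hrdef
  have hr0 : 0 < r := by positivity
  have hr1 : r ≤ 1 := by
    rw [hrdef, div_le_one (by positivity)]; linarith
  have hKr : (K:ℝ) * r ≤ 1/2 := by
    rw [hrdef, mul_one_div, div_le_div_iff₀ (by positivity) two_pos]
    nlinarith
  -- pointwise lower bound on the ball
  have hball : ∀ y ∈ Metric.ball x r, t/2 ≤ |φ y| := by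
    intro y hy
    rw [Metric.mem_ball] at hy
    have hd : dist x y < r := by rwa [dist_comm]
    have h1 : dist (φ x) (φ y) ≤ (K:ℝ) * dist x y := hK.dist_le_mul x y
    rw [Real.dist_eq] at h1
    have h2 : |φ x| - |φ y| ≤ |φ x - φ y| := abs_sub_abs_le_abs_sub _ _
    nlinarith
  -- integrability
  have hint : Integrable (fun y => Real.exp (α * |φ y|)) ν := by
    have : Continuous fun y => Real.exp (α * |φ y|) :=
      Real.continuous_exp.comp (continuous_const.mul hK.continuous.abs)
    exact this.integrable_of_hasCompactSupport (HasCompactSupport.of_compactSpace _)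
  have hmeas : MeasurableSet (Metric.ball x r) := measurableSet_ball
  -- key integral bound
  have key : Real.exp (α * (t/2)) * (ν (Metric.ball x r)).toReal ≤ M := by
    have h1 : ∫ _ in Metric.ball x r, Real.exp (α*(t/2)) ∂ν
        ≤ ∫ y in Metric.ball x r, Real.exp (α*|φ y|) ∂ν := by
      refine setIntegral_mono_on (integrableOn_const measure_ball_lt_top.ne)
        hint.integrableOn hmeas ?_
      intro y hy
      exact Real.exp_le_exp.2 (by nlinarith [hball y hy])
    have h2 : ∫ y in Metric.ball x r, Real.exp (α*|φ y|) ∂ν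
        ≤ ∫ y, Real.exp (α*|φ y|) ∂ν :=
      setIntegral_le_integral hint (Filter.Eventually.of_forall fun y => (Real.exp_pos _).le)
    rw [setIntegral_const, smul_eq_mul, mul_comm] at h1
    exact h1.trans (h2.trans (hexp φ hφ))
  have hvb := hvol x r hr0 hr1
  have hrD : (0:ℝ) < r ^ D := Real.rpow_pos_of_pos hr0 D
  have key2 : c * r ^ D * Real.exp (α*(t/2)) ≤ M := by
    have := mul_le_mul_of_nonneg_left hvb (Real.exp_pos (α*(t/2))).le
    nlinarith
  -- take logarithms
  have hexp_le : Real.exp (α*(t/2)) ≤ M / (c * r ^ D) := by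
    rw [le_div_iff₀ (by positivity)]
    nlinarith
  have hlog : α*(t/2) ≤ Real.log (M / (c * r ^ D)) :=
    (Real.le_log_iff_exp_le (by positivity)).2 hexp_le
  have hlogsplit : Real.log (M / (c * r ^ D))
      = Real.log M - Real.log c - D * Real.log r := by
    rw [Real.log_div hM.ne' (by positivity), Real.log_mul hc.ne' hrD.ne',
      Real.log_rpow hr0]
    ring
  have hlogr : Real.log r = -(Real.log 2 + Real.log ((K:ℝ)+1)) := by
    rw [hrdef, one_div, Real.log_inv, Real.log_mul two_ne_zero (by positivity)]
  have hK1 : Real.log ((K:ℝ)+1) ≤ Real.log 2 + max 0 (Real.log K) := by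
    rcases le_total (K:ℝ) 1 with h | h
    · have h1 : Real.log ((K:ℝ)+1) ≤ Real.log 2 :=
        Real.log_le_log (by positivity) (by linarith)
      linarith
    · have h1 : Real.log ((K:ℝ)+1) ≤ Real.log (2*(K:ℝ)) :=
        Real.log_le_log (by positivity) (by linarith)
      rw [Real.log_mul two_ne_zero (by positivity)] at h1
      have h2 : Real.log (K:ℝ) ≤ max 0 (Real.log K) := le_max_right _ _
      linarith
  have hMc : Real.log M - Real.log c ≤ m1 := by
    rw [hm1def, ← Real.log_div hM.ne' hc.ne']
    exact le_max_right _ _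
  -- assemble
  have hmain : α * (t/2) ≤ m1 + 2*D*Real.log 2 + D * max 0 (Real.log K) := by
    rw [hlogsplit, hlogr] at hlog
    have h3 := mul_le_mul_of_nonneg_left hK1 hD.le
    clear hint key key2 hexp_le hball hexp hvol hmeas hK hvb hlogsplit hlogr
    linarith
  have hfin : t ≤ (2/α) * (m1 + 2*D*Real.log 2 + D * max 0 (Real.log K)) := by
    have h := mul_le_mul_of_nonneg_left hmain hα2.le
    have h2 : (2/α) * (α * (t/2)) = t := by field_simp
    linarith
  have hDle : (2/α) * D ≤ A₀ := by rw [hAdef]; nlinarith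
  have hCle : (2/α) * (m1 + 2*D*Real.log 2) ≤ A₀ := by rw [hAdef]; nlinarith
  clear_value t A₀
  nlinarith [mul_le_mul_of_nonneg_right hDle hLnn]
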